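/- Let Σ be a finite alphabet and let x and y be nonempty words over Σ. If there exists a y-bordered word z such that x is not a subword of z, then there exists such a word z with |z| < (|x|+1)(2|y|+3). -/

import Mathlib

/-- Number of (possibly overlapping) occurrences of `x` as a contiguous
subword (factor) of `z`. -/
def occCount {α : Type*} [DecidableEq α] (x z : List α) : ℕ :=
  ((List.range (z.length + 1)).filter (fun i => decide (x <+: z.drop i))).length

/-- `wpow w n` is the word `w` concatenated with itself `n` times. -/
def wpow {α : Type*} (w : List α) (n : ℕ) : List α := (List.replicate n w).flatten

/-- `z` is `y`-bordered: `z ≠ y` and `y` is both a prefix and a suffix of `z`. -/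
def IsBordered {α : Type*} (y z : List α) : Prop := z ≠ y ∧ y <+: z ∧ y <:+ z

/-- `x` is interlaced by `y`: `y` is a subword (factor) of every `x`-bordered word. -/
def InterlacedBy {α : Type*} (x y : List α) : Prop :=
  ∀ z : List α, IsBordered x z → y <:+: z


lemma suffix_of_suffix_length_le' {α : Type*} {a b l : List α}
    (ha : a <:+ l) (hb : b <:+ l) (h : a.length ≤ b.length) : a <:+ b := by
  rw [← List.reverse_prefix] at ha hb ⊢
  exact List.prefix_of_prefix_length_le ha hb (by simpa using h)

lemma infix_append_split {α : Type*} {x s u : List α} (h : x <:+: s ++ u) :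
    x <:+: s ∨ x <:+: u ∨
      ∃ p q, p ++ q = x ∧ p ≠ [] ∧ q ≠ [] ∧ p <:+ s ∧ q <+: u := by
  obtain ⟨c, d, hcd⟩ := h
  have hcd' : s ++ u = c ++ (x ++ d) := by simpa [List.append_assoc] using hcd.symm
  have hlen : s.length + u.length = c.length + (x.length + d.length) := by
    have := congrArg List.length hcd'; simpa using this
  rcases le_or_gt (c.length + x.length) s.length with hle | h1
  · left
    have hpre : c ++ x <+: s :=
      List.prefix_of_prefix_length_le
        ⟨d, by simpa [List.append_assoc] using hcd⟩
        (List.prefix_append s u) (by simpa using hle)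
    obtain ⟨e, he⟩ := hpre
    exact ⟨c, e, by simpa [List.append_assoc] using he⟩
  rcases le_or_gt s.length c.length with hge | h2
  · right; left
    have hl2 : (x ++ d).length ≤ u.length := by simp [List.length_append]; omega
    have hsuf : x ++ d <:+ u :=
      suffix_of_suffix_length_le'
        ⟨c, by simpa [List.append_assoc] using hcd⟩ (List.suffix_append s u) hl2
    obtain ⟨w, hw⟩ := hsuf
    exact ⟨w, d, by simpa [List.append_assoc] using hw⟩
  · right; right
    set k := s.length - c.length with hk
    have hk0 : 0 < k := by omega
    have hkx : k < x.length := by omega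
    have hs : s = c ++ x.take k := by
      have h3 := List.take_left (l₁ := s) (l₂ := u)
      rw [hcd', List.take_append, List.take_append] at h3
      rw [List.take_of_length_le (by omega : c.length ≤ s.length)] at h3
      have h4 : s.length - c.length - x.length = 0 := by omega
      rw [h4] at h3
      simpa using h3.symm
    have hu : u = x.drop k ++ d := by
      have h3 := List.drop_left (l₁ := s) (l₂ := u)
      rw [hcd', List.drop_append, List.drop_append] at h3
      rw [List.drop_eq_nil_of_le (by omega : c.length ≤ s.length)] at h3
      have h4 : s.length - c.length - x.length = 0 := by omega
      rw [h4] at h3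
      simpa using h3.symm
    refine ⟨x.take k, x.drop k, List.take_append_drop k x, ?_, ?_, ⟨c, hs.symm⟩, ⟨d, hu.symm⟩⟩
    · intro hnil
      have h5 := congrArg List.length hnil
      rw [List.length_take, List.length_nil] at h5; omega
    · intro hnil
      have h5 := congrArg List.length hnil
      rw [List.length_drop, List.length_nil] at h5; omega

lemma cut_lemma {α : Type} (x y z : List α) (hx : x ≠ []) (hy : y ≠ [])
    (hb : IsBordered y z) (hninf : ¬ x <:+: z)
    (hlong : (x.length + 1) * (2 * y.length + 3) ≤ z.length) :
    ∃ z', IsBordered y z' ∧ ¬ x <:+: z' ∧ z'.length < z.length := by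
  classical
  have hxpos : 0 < x.length := List.length_pos_iff.mpr hx
  have hypos : 0 < y.length := List.length_pos_iff.mpr hy
  have hexp : (x.length + 1) * (2 * y.length + 3)
      = 2 * (x.length * y.length) + 3 * x.length + 2 * y.length + 3 := by ring
  have hxy : 0 ≤ x.length * y.length := Nat.zero_le _
  set f : ℕ → ℕ := fun i =>
    Nat.findGreatest (fun ℓ => x.take ℓ <:+ z.take i) (x.length - 1) with hfdef
  have claim : ∀ a b : ℕ, a ∈ Finset.Icc y.length (z.length - y.length) →
      b ∈ Finset.Icc y.length (z.length - y.length) → a < b → f a = f b →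
      ∃ z', IsBordered y z' ∧ ¬ x <:+: z' ∧ z'.length < z.length := by
    intro a b haS hbS hab hfeq
    obtain ⟨ha1, ha2⟩ := Finset.mem_Icc.mp haS
    obtain ⟨hb1, hb2⟩ := Finset.mem_Icc.mp hbS
    have hzy : 2 * y.length ≤ z.length := by omega
    refine ⟨z.take a ++ z.drop b, ⟨?_, ?_, ?_⟩, ?_, ?_⟩
    · -- ≠ y
      intro he
      have := congrArg List.length he
      rw [List.length_append, List.length_take, List.length_drop] at this
      omega
    · -- prefix
      exact (List.prefix_take_iff.mpr ⟨hb.2.1, ha1⟩).trans (List.prefix_append _ _)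
    · -- suffix
      refine (suffix_of_suffix_length_le' hb.2.2 (List.drop_suffix b z) ?_).trans
        (List.suffix_append _ _)
      rw [List.length_drop]; omega
    · -- no x
      intro hinf
      rcases infix_append_split hinf with h | h | ⟨p, q, hpq, hp, hq, hps, hqu⟩
      · exact hninf (h.trans (List.take_prefix a z).isInfix)
      · exact hninf (h.trans (List.drop_suffix b z).isInfix)
      · have hql : 0 < q.length := List.length_pos_iff.mpr hq
        have hxlen : x.length = p.length + q.length := by
          rw [← hpq]; simp [List.length_append]
        have hplen : p.length < x.length := by omega
        have hxp : x.take p.length = p := by rw [← hpq, List.take_left]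
        have hP : x.take p.length <:+ z.take a := by rw [hxp]; exact hps
        have hple : p.length ≤ f a := by
          by_contra hgt
          push_neg at hgt
          exact Nat.findGreatest_is_greatest hgt (by omega) hP
        have hspec_a : x.take (f a) <:+ z.take a := by
          rw [hfdef]
          exact Nat.findGreatest_spec (P := fun ℓ => x.take ℓ <:+ z.take a)
            (Nat.zero_le _) (by simp)
        have hspec_b : x.take (f b) <:+ z.take b := by
          rw [hfdef]
          exact Nat.findGreatest_spec (P := fun ℓ => x.take ℓ <:+ z.take b)
            (Nat.zero_le _) (by simp)
        have hfa_le : f a ≤ x.length - 1 := Nat.findGreatest_le _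
        have hpfa : p <:+ x.take (f a) := by
          refine suffix_of_suffix_length_le' hps hspec_a ?_
          rw [List.length_take]; omega
        have hpzb : p <:+ z.take b := by
          rw [hfeq] at hpfa
          exact hpfa.trans hspec_b
        obtain ⟨c, hc⟩ := hpzb
        obtain ⟨d', hd⟩ := hqu
        refine hninf ⟨c, d', ?_⟩
        calc c ++ x ++ d' = (c ++ p) ++ (q ++ d') := by
              rw [← hpq]; simp [List.append_assoc]
          _ = z.take b ++ z.drop b := by rw [hc, hd]
          _ = z := List.take_append_drop b z
    · -- shorter
      rw [List.length_append, List.length_take, List.length_drop]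
      omega
  have hmaps : ∀ i ∈ Finset.Icc y.length (z.length - y.length),
      f i ∈ Finset.range x.length := by
    intro i _
    rw [Finset.mem_range]
    exact lt_of_le_of_lt (Nat.findGreatest_le _) (by omega)
  have hcard : (Finset.range x.length).card
      < (Finset.Icc y.length (z.length - y.length)).card := by
    rw [Finset.card_range, Nat.card_Icc]
    omega
  obtain ⟨a, ha, b, hbm, hne, hfeq⟩ :=
    Finset.exists_ne_map_eq_of_card_lt_of_maps_to hcard hmaps
  rcases hne.lt_or_gt with hab | hab
  · exact claim a b ha hbm hab hfeq
  · exact claim b a hbm ha hab hfeq.symm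

lemma shorten {α : Type} (x y : List α) (hx : x ≠ []) (hy : y ≠ []) :
    ∀ n (z : List α), z.length ≤ n → IsBordered y z → ¬ x <:+: z →
    ∃ z', IsBordered y z' ∧ ¬ x <:+: z' ∧
      z'.length < (x.length + 1) * (2 * y.length + 3) := by
  intro n
  induction n with
  | zero =>
    intro z hz hb _
    exfalso
    have h1 := hb.2.1.length_le
    have h2 := List.length_pos_iff.mpr hy
    omega
  | succ n ih =>
    intro z hz hb hninf
    by_cases hsmall : z.length < (x.length + 1) * (2 * y.length + 3)
    · exact ⟨z, hb, hninf, hsmall⟩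
    · push_neg at hsmall
      obtain ⟨z', hb', hninf', hlt⟩ := cut_lemma x y z hx hy hb hninf hsmall
      exact ih z' (by omega) hb' hninf'

theorem stmt_8 {α : Type} [Fintype α] (x y : List α) (hx : x ≠ []) (hy : y ≠ [])
    (h : ∃ z : List α, IsBordered y z ∧ ¬ x <:+: z) :
    ∃ z : List α, IsBordered y z ∧ ¬ x <:+: z ∧
      z.length < (x.length + 1) * (2 * y.length + 3) := by
  obtain ⟨z, hb, hninf⟩ := h
  exact shorten x y hx hy z.length z le_rfl hb hninf
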